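/- Let Ψ be a closed subroot system of the twisted affine root system Φ. Then one of the following holds: (1) Gr(Ψ) = Φ̊; (2) Gr(Ψ) is a proper subset of Φ̊ that is closed in Φ̊; (3) Gr(Ψ) is a proper subset of Φ̊ that is semi-closed. In particular, whenever α, β ∈ Gr(Ψ) and α + β ∈ Φ̊ ∖ Gr(Ψ), both α and β are short roots and α + β is a long root. -/

import Mathlib

noncomputable section

variable {V : Type*} [NormedAddCommGroup V] [InnerProductSpace ℝ V]

/-- The Cartan pairing `⟨β, α∨⟩ = 2(β,α)/(α,α)`. -/
def cartanPair (α β : V) : ℝ := 2 * (inner ℝ β α : ℝ) / (inner ℝ α α : ℝ)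

/-- The reflection `s_α` on `V`: `s_α(β) = β - ⟨β,α∨⟩ α`. -/
def reflV (α β : V) : V := β - cartanPair α β • α

/-- The affine reflection `s_x` on `V × ℝ` with respect to the bilinear form
`B((x,a),(y,b)) = (x,y)`. -/
def reflA (x y : V × ℝ) : V × ℝ :=
  y - (2 * (inner ℝ y.1 x.1 : ℝ) / (inner ℝ x.1 x.1 : ℝ)) • x

/-- A finite irreducible reduced crystallographic root system in `V`. -/
structure IsIrreducibleRootSystem (R : Set V) : Prop where
  finite : R.Finite
  spans : Submodule.span ℝ R = ⊤
  zero_notMem : (0 : V) ∉ R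
  reduced : ∀ α ∈ R, ∀ c : ℝ, c • α ∈ R → c = 1 ∨ c = -1
  cartan_int : ∀ α ∈ R, ∀ β ∈ R, ∃ n : ℤ, cartanPair α β = (n : ℝ)
  refl_mem : ∀ α ∈ R, ∀ β ∈ R, reflV α β ∈ R
  irred : ∀ A B : Set V, R = A ∪ B → A.Nonempty → B.Nonempty →
    ∃ a ∈ A, ∃ b ∈ B, (inner ℝ a b : ℝ) ≠ 0

/-- A subroot system of a set `Φ` of affine roots: a nonempty proper subset stable
under the reflections `s_x`, `x ∈ Ψ`. -/
def IsSubrootSystem (Φ Ψ : Set (V × ℝ)) : Prop :=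
  Ψ.Nonempty ∧ Ψ ⊆ Φ ∧ Ψ ≠ Φ ∧ ∀ x ∈ Ψ, ∀ y ∈ Ψ, reflA x y ∈ Ψ

/-- `Ψ` is closed in `Φ`. -/
def IsClosedIn (Φ Ψ : Set (V × ℝ)) : Prop := ∀ x ∈ Ψ, ∀ y ∈ Ψ, x + y ∈ Φ → x + y ∈ Ψ

def IsClosedSubrootSystem (Φ Ψ : Set (V × ℝ)) : Prop :=
  IsSubrootSystem Φ Ψ ∧ IsClosedIn Φ Ψ

/-- A maximal closed subroot system of `Φ`: any closed subroot system of `Φ`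
containing it equals it. -/
def IsMaximalClosedSubrootSystem (Φ Ψ : Set (V × ℝ)) : Prop :=
  IsClosedSubrootSystem Φ Ψ ∧ ∀ Δ, IsClosedSubrootSystem Φ Δ → Ψ ⊆ Δ → Δ = Ψ

/-- A subroot system of a finite root system `R`. -/
def IsSubrootSystemF (R S : Set V) : Prop :=
  S.Nonempty ∧ S ⊆ R ∧ S ≠ R ∧ ∀ α ∈ S, ∀ β ∈ S, reflV α β ∈ S

/-- `S` is closed in the finite root system `R`. -/
def IsClosedInF (R S : Set V) : Prop := ∀ α ∈ S, ∀ β ∈ S, α + β ∈ R → α + β ∈ S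

def IsMaximalClosedSubrootSystemF (R S : Set V) : Prop :=
  (IsSubrootSystemF R S ∧ IsClosedInF R S) ∧
    ∀ T, IsSubrootSystemF R T → IsClosedInF R T → S ⊆ T → T = S

/-- A `ℤ`-linear function on `S`: the restriction to `S` of an additive group
homomorphism from the subgroup of `V` generated by `S` to `ℤ`. -/
def IsZLinearOn (S : Set V) (p : V → ℤ) : Prop :=
  ∃ f : AddSubgroup.closure S →+ ℤ,
    ∀ α, ∀ h : α ∈ S, p α = f ⟨α, AddSubgroup.subset_closure h⟩

/-- An irreducible subset: nonempty and not a union of two nonempty mutually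
orthogonal subsets. -/
def IsIrreducibleSubset (S : Set V) : Prop :=
  S.Nonempty ∧ ∀ A B : Set V, S = A ∪ B → A.Nonempty → B.Nonempty →
    ∃ a ∈ A, ∃ b ∈ B, (inner ℝ a b : ℝ) ≠ 0

/-- A short root: squared length `a`. -/
def ShortR (R : Set V) (a : ℝ) (α : V) : Prop := α ∈ R ∧ (inner ℝ α α : ℝ) = a

/-- A long root: squared length `b`. -/
def LongR (R : Set V) (b : ℝ) (α : V) : Prop := α ∈ R ∧ (inner ℝ α α : ℝ) = b

/-- The data of a non simply laced irreducible root system `R` with short squared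
length `a`, long squared length `b = m·a`, `m ∈ {2,3}`. -/
structure IsTwistedData (R : Set V) (a b : ℝ) (m : ℕ) : Prop where
  root : IsIrreducibleRootSystem R
  len : ∀ α ∈ R, (inner ℝ α α : ℝ) = a ∨ (inner ℝ α α : ℝ) = b
  a_pos : 0 < a
  a_lt_b : a < b
  ex_short : ∃ α ∈ R, (inner ℝ α α : ℝ) = a
  ex_long : ∃ α ∈ R, (inner ℝ α α : ℝ) = b
  ratio : b = (m : ℝ) * a
  m23 : m = 2 ∨ m = 3

/-- The twisted affine root system attached to `(R, a, b, m)`. -/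
def twistedRS (R : Set V) (a b : ℝ) (m : ℕ) : Set (V × ℝ) :=
  {x | (ShortR R a x.1 ∧ ∃ r : ℤ, x.2 = (r : ℝ)) ∨
       (LongR R b x.1 ∧ ∃ r : ℤ, x.2 = (m : ℝ) * (r : ℝ))}

/-- The gradient of a set of affine roots (twisted case). -/
def GrT (Ψ : Set (V × ℝ)) : Set V := {α | ∃ c : ℝ, (α, c) ∈ Ψ}

/-- `Z_α(Ψ) = {c ∈ ℤ : α + cδ ∈ Ψ}`. -/
def ZSetT (Ψ : Set (V × ℝ)) (α : V) : Set ℤ := {c | (α, (c : ℝ)) ∈ Ψ}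

/-- The difference set `{r - r' : r, r' ∈ Z_α(Ψ)}`. -/
def DiffSetT (Ψ : Set (V × ℝ)) (α : V) : Set ℤ :=
  {d | ∃ r ∈ ZSetT Ψ α, ∃ r' ∈ ZSetT Ψ α, d = r - r'}

/-- A semi-closed subset of `R`: not closed, and any failure of closedness comes
from two short roots summing to a long root. -/
def IsSemiClosed (R : Set V) (a b : ℝ) (S : Set V) : Prop :=
  ¬ IsClosedInF R S ∧
    ∀ α ∈ S, ∀ β ∈ S, α + β ∈ R \ S →
      ShortR R a α ∧ ShortR R a β ∧ LongR R b (α + β)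

/-- The lift of a subset `S ⊆ R` in the twisted affine root system. -/
def liftT (R : Set V) (a b : ℝ) (m : ℕ) (S : Set V) : Set (V × ℝ) :=
  {x | (ShortR R a x.1 ∧ x.1 ∈ S ∧ ∃ r : ℤ, x.2 = (r : ℝ)) ∨
       (LongR R b x.1 ∧ x.1 ∈ S ∧ ∃ r : ℤ, x.2 = (m : ℝ) * (r : ℝ))}


private lemma statement8_no_int (a b : ℝ) (ha : 0 < a) (hab : a < b) (n : ℤ)
    (h : -a = (n : ℝ) * b) : False := by
  have hb : (0:ℝ) < b := ha.trans hab
  have h1 : (n : ℝ) < 0 := by nlinarith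
  have h2 : (-1 : ℝ) < (n : ℝ) := by nlinarith
  have h1' : n < 0 := by exact_mod_cast h1
  have h2' : (-1 : ℤ) < n := by exact_mod_cast h2
  omega

/-- The gradient of a closed subroot system of a twisted affine root
system is either all of `Φ̊`, or a proper closed subset, or a proper semi-closed
subset; in particular failures of closedness involve two short roots summing to a
long root. -/
theorem statement8
    {V : Type*} [NormedAddCommGroup V] [InnerProductSpace ℝ V] [FiniteDimensional ℝ V]
    (R : Set V) (a b : ℝ) (m : ℕ) (hT : IsTwistedData R a b m)
    (Ψ : Set (V × ℝ)) (hΨ : IsClosedSubrootSystem (twistedRS R a b m) Ψ) :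
    (GrT Ψ = R ∨
     (GrT Ψ ⊂ R ∧ IsClosedInF R (GrT Ψ)) ∨
     (GrT Ψ ⊂ R ∧ IsSemiClosed R a b (GrT Ψ))) ∧
    ∀ α ∈ GrT Ψ, ∀ β ∈ GrT Ψ, α + β ∈ R \ GrT Ψ →
      ShortR R a α ∧ ShortR R a β ∧ LongR R b (α + β) := by
  obtain ⟨⟨hne, hΨΦ, hΨne, hrefl⟩, hcl⟩ := hΨ
  have hGrR : GrT Ψ ⊆ R := by
    rintro α ⟨c, hc⟩
    rcases hΨΦ hc with ⟨⟨h1, _⟩, _⟩ | ⟨⟨h1, _⟩, _⟩ <;> exact h1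
  have hab : a ≠ b := ne_of_lt hT.a_lt_b
  have hb0 : (0:ℝ) < b := hT.a_pos.trans hT.a_lt_b
  have hint : ∀ x ∈ Ψ, ∃ r : ℤ, x.2 = (r : ℝ) := by
    intro x hx
    rcases hΨΦ hx with ⟨_, r, hr⟩ | ⟨_, r, hr⟩
    · exact ⟨r, hr⟩
    · exact ⟨(m : ℤ) * r, by rw [hr]; push_cast; ring⟩
  have P : ∀ α ∈ GrT Ψ, ∀ β ∈ GrT Ψ, α + β ∈ R \ GrT Ψ →
      ShortR R a α ∧ ShortR R a β ∧ LongR R b (α + β) := by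
    rintro α ⟨c, hc⟩ β ⟨d, hd⟩ hsum
    have hαR : α ∈ R := hGrR ⟨c, hc⟩
    have hβR : β ∈ R := hGrR ⟨d, hd⟩
    have hsR : α + β ∈ R := hsum.1
    have hnot : α + β ∉ GrT Ψ := hsum.2
    have hadd : (α, c) + (β, d) = (α + β, c + d) := rfl
    have hclose : (α + β, c + d) ∉ twistedRS R a b m := by
      intro h
      have h2 := hcl (α, c) hc (β, d) hd (hadd ▸ h)
      exact hnot ⟨c + d, hadd ▸ h2⟩
    obtain ⟨ci, hci⟩ := hint (α, c) hc
    obtain ⟨di, hdi⟩ := hint (β, d) hd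
    have hci : c = (ci : ℝ) := hci
    have hdi : d = (di : ℝ) := hdi
    -- α + β is long
    have hlong : (inner ℝ (α + β) (α + β) : ℝ) = b := by
      rcases hT.len _ hsR with h | h
      · exact absurd (Or.inl ⟨⟨hsR, h⟩, ⟨ci + di, by
          show c + d = ((ci + di : ℤ) : ℝ); rw [hci, hdi]; push_cast; ring⟩⟩) hclose
      · exact h
    have hexp := real_inner_add_add_self α β
    -- helper: a long root in the gradient has c a multiple of m
    have hmul : ∀ γ : V, ∀ e : ℝ, (γ, e) ∈ Ψ → (inner ℝ γ γ : ℝ) = b →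
        ∃ r : ℤ, e = (m : ℝ) * (r : ℝ) := by
      intro γ e hγ hγb
      rcases hΨΦ hγ with ⟨⟨_, ha'⟩, _⟩ | ⟨_, r, hr⟩
      · exact absurd (hγb ▸ ha') (Ne.symm hab)
      · exact ⟨r, hr⟩
    have hαshort : (inner ℝ α α : ℝ) = a := by
      rcases hT.len α hαR with h | h
      · exact h
      exfalso
      obtain ⟨rα, hrα⟩ := hmul α c hc h
      rcases hT.len β hβR with hβl | hβl
      · -- β short, α long : Cartan integrality fails
        obtain ⟨n, hn⟩ := hT.root.cartan_int α hαR β hβR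
        have hip : 2 * (inner ℝ β α : ℝ) = -a := by
          rw [real_inner_comm]; nlinarith [hexp, hlong, h, hβl]
        rw [cartanPair, hip, h] at hn
        have : -a = (n : ℝ) * b := by
          field_simp at hn; linarith
        exact statement8_no_int a b hT.a_pos hT.a_lt_b n this
      · -- both long : closure forces α+β ∈ Gr Ψ
        obtain ⟨rβ, hrβ⟩ := hmul β d hd hβl
        exact hclose (Or.inr ⟨⟨hsR, hlong⟩, ⟨rα + rβ, by
          show c + d = (m : ℝ) * ((rα + rβ : ℤ) : ℝ)
          rw [hrα, hrβ]; push_cast; ring⟩⟩)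
    have hβshort : (inner ℝ β β : ℝ) = a := by
      rcases hT.len β hβR with h | h
      · exact h
      exfalso
      obtain ⟨n, hn⟩ := hT.root.cartan_int β hβR α hαR
      have hip : 2 * (inner ℝ α β : ℝ) = -a := by
        nlinarith [hexp, hlong, h, hαshort]
      rw [cartanPair, hip, h] at hn
      have : -a = (n : ℝ) * b := by
        field_simp at hn; linarith
      exact statement8_no_int a b hT.a_pos hT.a_lt_b n this
    exact ⟨⟨hαR, hαshort⟩, ⟨hβR, hβshort⟩, ⟨hsR, hlong⟩⟩
  refine ⟨?_, P⟩
  by_cases hGR : GrT Ψ = R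
  · exact Or.inl hGR
  by_cases hc2 : IsClosedInF R (GrT Ψ)
  · exact Or.inr (Or.inl ⟨hGrR.ssubset_of_ne hGR, hc2⟩)
  · exact Or.inr (Or.inr ⟨hGrR.ssubset_of_ne hGR, hc2, P⟩)
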